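/- The five-task vector k = (3, 5, 8, 8, 8) is pinwheel-schedulable: there exists a schedule σ : ℕ → Option (Fin 5) in which task 0 occurs in every window of 3 consecutive slots, task 1 in every window of 5 consecutive slots, and tasks 2, 3, 4 each in every window of 8 consecutive slots. -/
import Mathlib

private def L : Fin 8 → Option (Fin 5) :=
  ![some 0, some 1, some 2, some 0, some 1, some 3, some 0, some 4]

private def off : Fin 5 → Fin 8 → ℕ :=
  ![![0,2,1,0,2,1,0,1],
    ![1,0,2,1,0,4,3,2],
    ![2,1,0,7,6,5,4,3],
    ![5,4,3,2,1,0,7,6],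
    ![7,6,5,4,3,2,1,0]]

private lemma off_lt : ∀ (i : Fin 5) (r : Fin 8), off i r < (![3,5,8,8,8] : Fin 5 → ℕ) i := by
  decide

private lemma L_hit : ∀ (i : Fin 5) (r : Fin 8),
    L ⟨(r.val + off i r) % 8, Nat.mod_lt _ (by norm_num)⟩ = some i := by
  decide

/-- the five-task vector `k = (3,5,8,8,8)` is pinwheel-schedulable:
there is a schedule in which task 0 occurs in every window of 3 consecutive slots,
task 1 in every window of 5, and tasks 2, 3, 4 each in every window of 8. -/
theorem schedule_35888 :
    ∃ σ : ℕ → Option (Fin 5),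
      ∀ (i : Fin 5) (t : ℕ),
        ∃ s, t ≤ s ∧ s < t + (![3, 5, 8, 8, 8] : Fin 5 → ℕ) i ∧ σ s = some i := by
  refine ⟨fun n => L ⟨n % 8, Nat.mod_lt _ (by norm_num)⟩, fun i t => ?_⟩
  set r : Fin 8 := ⟨t % 8, Nat.mod_lt _ (by norm_num)⟩ with hr
  refine ⟨t + off i r, Nat.le_add_right _ _, by have := off_lt i r; omega, ?_⟩
  have hmod : (t + off i r) % 8 = (r.val + off i r) % 8 := by
    simp only [hr]; omega
  have : (⟨(t + off i r) % 8, Nat.mod_lt _ (by norm_num)⟩ : Fin 8)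
      = ⟨(r.val + off i r) % 8, Nat.mod_lt _ (by norm_num)⟩ := Fin.ext hmod
  show L ⟨(t + off i r) % 8, _⟩ = some i
  rw [this]; exact L_hit i r
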